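/- arXiv:2401.08402 — 3 statements merged into one kernel-verified Lean document; each statement's English description precedes it below -/
import Mathlib

section
/- Let a ∈ ℝ^m be fixed, δ > 0, ζ ∈ (0, δ/2), and let τ₁,…,τ_m be i.i.d. Uniform[−δ/2, δ/2]. Let Z = {i ∈ [m] : t ↦ Q_δ(a_i + τ_i + t) is discontinuous on [−ζ, ζ]}. Then P(|Z| ≥ 5mζ/δ) ≤ exp(−mζ/δ). -/
open MeasureTheory ProbabilityTheory

/-- The uniform quantizer with resolution `δ`: `Q_δ(a) = δ·(⌊a/δ⌋ + 1/2)`. -/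
noncomputable def uniformQuantizer (δ a : ℝ) : ℝ := δ * ((⌊a / δ⌋ : ℝ) + 1 / 2)

/-- The law of a dither uniformly distributed on `[−δ/2, δ/2]`. -/
noncomputable def uniformDitherLaw (δ : ℝ) : Measure ℝ :=
  (ENNReal.ofReal δ)⁻¹ • volume.restrict (Set.Icc (-(δ / 2)) (δ / 2))




lemma disc_iff {δ ζ : ℝ} (hδ : 0 < δ) (hζ : 0 < ζ) (hζδ : ζ < δ / 2) (x : ℝ) :
    (¬ ContinuousOn (fun t => uniformQuantizer δ (x + t)) (Set.Icc (-ζ) ζ)) ↔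
      Int.fract ((x + ζ) / δ) < 2 * ζ / δ := by
  have hδ0 : δ ≠ 0 := hδ.ne'
  have key : ContinuousOn (fun t => uniformQuantizer δ (x + t)) (Set.Icc (-ζ) ζ) ↔
      ⌊(x - ζ) / δ⌋ = ⌊(x + ζ) / δ⌋ := by
    constructor
    · intro hc
      by_contra hne
      -- the ℤ-valued floor part is continuous on a connected set, so constant
      have hg : ContinuousOn (fun t => (⌊(x + t) / δ⌋ : ℝ)) (Set.Icc (-ζ) ζ) := by
        have : (fun t => (⌊(x + t) / δ⌋ : ℝ)) =
            fun t => uniformQuantizer δ (x + t) / δ - 1 / 2 := by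
          funext t; unfold uniformQuantizer; rw [mul_div_cancel_left₀ _ hδ0]; ring
        rw [this]
        exact (hc.div_const δ).sub continuousOn_const
      have hpre : IsPreconnected ((fun t => (⌊(x + t) / δ⌋ : ℝ)) '' Set.Icc (-ζ) ζ) :=
        (isPreconnected_Icc).image _ hg
      have hmem1 : ((⌊(x - ζ) / δ⌋ : ℝ)) ∈ (fun t => (⌊(x + t) / δ⌋ : ℝ)) '' Set.Icc (-ζ) ζ := by
        refine ⟨-ζ, Set.mem_Icc.2 ⟨le_refl _, by linarith⟩, by ring_nf⟩
      have hmem2 : ((⌊(x + ζ) / δ⌋ : ℝ)) ∈ (fun t => (⌊(x + t) / δ⌋ : ℝ)) '' Set.Icc (-ζ) ζ := by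
        refine ⟨ζ, Set.mem_Icc.2 ⟨by linarith, le_refl _⟩, rfl⟩
      have hord := hpre.ordConnected
      have hlt : ⌊(x - ζ) / δ⌋ < ⌊(x + ζ) / δ⌋ := by
        refine lt_of_le_of_ne ?_ hne
        exact Int.floor_le_floor (div_le_div_of_nonneg_right (by linarith) hδ.le)
      have hmid : ((⌊(x - ζ) / δ⌋ : ℝ) + 1 / 2) ∈
          (fun t => (⌊(x + t) / δ⌋ : ℝ)) '' Set.Icc (-ζ) ζ := by
        apply hord.out hmem1 hmem2
        constructor
        · linarith
        · have : (⌊(x - ζ) / δ⌋ : ℝ) + 1 ≤ (⌊(x + ζ) / δ⌋ : ℝ) := by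
            exact_mod_cast hlt
          linarith
      obtain ⟨t, _, ht⟩ := hmid
      have : Int.fract ((⌊(x - ζ) / δ⌋ : ℝ) + 1 / 2) = 0 := by
        rw [← ht]; exact Int.fract_intCast _
      rw [Int.fract_intCast_add] at this
      norm_num [Int.fract_eq_self.2 (by norm_num : (0:ℝ) ≤ 1/2 ∧ (1:ℝ)/2 < 1)] at this
    · intro hfl
      have hconst : ∀ t ∈ Set.Icc (-ζ) ζ, ⌊(x + t) / δ⌋ = ⌊(x + ζ) / δ⌋ := by
        intro t ht
        obtain ⟨h1, h2⟩ := Set.mem_Icc.1 ht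
        apply le_antisymm
        · exact Int.floor_le_floor (div_le_div_of_nonneg_right (by linarith) hδ.le)
        · rw [← hfl]
          exact Int.floor_le_floor (div_le_div_of_nonneg_right (by linarith) hδ.le)
      have : ∀ t ∈ Set.Icc (-ζ) ζ, (fun t => uniformQuantizer δ (x + t)) t =
          δ * ((⌊(x + ζ) / δ⌋ : ℝ) + 1 / 2) := by
        intro t ht; simp only [uniformQuantizer, hconst t ht]
      exact (continuousOn_const.congr this)
  rw [key]
  have hxz : (x - ζ) / δ = (x + ζ) / δ - 2 * ζ / δ := by ring
  have hs1 : 2 * ζ / δ < 1 := by rw [div_lt_one hδ]; linarith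
  have hs0 : 0 < 2 * ζ / δ := by positivity
  constructor
  · intro hne
    have hlt : ⌊(x - ζ) / δ⌋ < ⌊(x + ζ) / δ⌋ :=
      lt_of_le_of_ne (Int.floor_le_floor (div_le_div_of_nonneg_right (by linarith) hδ.le)) hne
    rw [hxz, Int.floor_lt] at hlt
    have := Int.fract_add_floor ((x + ζ) / δ)  -- fract u + floor u = u? name?
    unfold Int.fract
    linarith [hlt]
  · intro hfr
    intro heq
    have : (x + ζ) / δ - 2 * ζ / δ < (⌊(x + ζ) / δ⌋ : ℝ) := by
      unfold Int.fract at hfr; linarith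
    have h2 : ⌊(x - ζ) / δ⌋ < ⌊(x + ζ) / δ⌋ := by
      rw [hxz, Int.floor_lt]; exact this
    omega

lemma frac_vol {s : ℝ} (hs0 : 0 ≤ s) (hs1 : s ≤ 1) (c : ℝ) :
    volume (Set.Icc c (c + 1) ∩ {u : ℝ | Int.fract u < s}) = ENNReal.ofReal s := by
  set n : ℤ := ⌊c⌋ with hn
  have hnc : (n : ℝ) ≤ c := Int.floor_le c
  have hcn : c < n + 1 := Int.lt_floor_add_one c
  -- replace Icc by Ico (differ by a point)
  have hIcc : volume (Set.Icc c (c + 1) ∩ {u : ℝ | Int.fract u < s}) =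
      volume (Set.Ico c (c + 1) ∩ {u : ℝ | Int.fract u < s}) := by
    apply le_antisymm
    · calc volume (Set.Icc c (c + 1) ∩ {u : ℝ | Int.fract u < s})
          ≤ volume ((Set.Ico c (c + 1) ∩ {u : ℝ | Int.fract u < s}) ∪ {c + 1}) := by
            apply measure_mono
            intro u ⟨hu1, hu2⟩
            rcases eq_or_lt_of_le hu1.2 with h | h
            · exact Or.inr (by simp [h])
            · exact Or.inl ⟨⟨hu1.1, h⟩, hu2⟩
        _ ≤ volume (Set.Ico c (c + 1) ∩ {u : ℝ | Int.fract u < s}) + volume ({c + 1} : Set ℝ) :=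
            measure_union_le _ _
        _ = volume (Set.Ico c (c + 1) ∩ {u : ℝ | Int.fract u < s}) := by
            rw [Real.volume_singleton, add_zero]
    · exact measure_mono (Set.inter_subset_inter_left _ Set.Ico_subset_Icc_self)
  rw [hIcc]
  have hset : Set.Ico c (c + 1) ∩ {u : ℝ | Int.fract u < s} =
      Set.Ico c ((n : ℝ) + s) ∪ Set.Ico ((n : ℝ) + 1) (min (c + 1) ((n : ℝ) + 1 + s)) := by
    ext u
    simp only [Set.mem_inter_iff, Set.mem_Ico, Set.mem_setOf_eq, Set.mem_union, lt_min_iff]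
    constructor
    · rintro ⟨⟨hu1, hu2⟩, hfr⟩
      rcases lt_or_ge u ((n : ℝ) + 1) with h | h
      · left
        have hfl : ⌊u⌋ = n := by
          rw [Int.floor_eq_iff]; constructor <;> [linarith; exact_mod_cast h]
        rw [Int.fract] at hfr
        rw [hfl] at hfr
        exact ⟨hu1, by linarith⟩
      · right
        have hfl : ⌊u⌋ = n + 1 := by
          rw [Int.floor_eq_iff]
          constructor
          · exact_mod_cast h
          · push_cast; linarith
        rw [Int.fract, hfl] at hfr
        push_cast at hfr
        exact ⟨h, hu2, by linarith⟩
    · rintro (⟨hu1, hu2⟩ | ⟨hu1, hu2, hu3⟩)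
      · have hfl : ⌊u⌋ = n := by
          rw [Int.floor_eq_iff]; constructor <;> [linarith; linarith]
        refine ⟨⟨hu1, by linarith⟩, ?_⟩
        rw [Int.fract, hfl]; linarith
      · have hfl : ⌊u⌋ = n + 1 := by
          rw [Int.floor_eq_iff]; push_cast; constructor <;> linarith
        refine ⟨⟨by linarith, hu2⟩, ?_⟩
        rw [Int.fract, hfl]; push_cast; linarith
  rw [hset]
  have hdisj : Disjoint (Set.Ico c ((n : ℝ) + s)) (Set.Ico ((n : ℝ) + 1) (min (c + 1) ((n : ℝ) + 1 + s))) := by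
    rw [Set.Ico_disjoint_Ico]
    exact le_max_of_le_right ((min_le_left _ _).trans (by linarith))
  rw [measure_union hdisj measurableSet_Ico, Real.volume_Ico, Real.volume_Ico]
  rcases le_or_gt (c - n) s with h | h
  · have hmin : min (c + 1) ((n : ℝ) + 1 + s) = c + 1 := min_eq_left (by linarith)
    rw [hmin, ← ENNReal.ofReal_add (by linarith) (by linarith)]
    ring_nf
  · have hmin : min (c + 1) ((n : ℝ) + 1 + s) = (n : ℝ) + 1 + s := min_eq_right (by linarith)
    rw [hmin, ENNReal.ofReal_eq_zero.2 (by linarith : (n : ℝ) + s - c ≤ 0), zero_add]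
    ring_nf





lemma fract_set_meas (δ b s : ℝ) : MeasurableSet {t : ℝ | Int.fract ((b + t) / δ) < s} := by
  exact measurableSet_lt (measurable_fract.comp ((measurable_const.add measurable_id).div_const δ))
    measurable_const

lemma dither_univ {δ : ℝ} (hδ : 0 < δ) : uniformDitherLaw δ Set.univ = 1 := by
  simp only [uniformDitherLaw, Measure.smul_apply, Measure.restrict_apply MeasurableSet.univ,
    Set.univ_inter, Real.volume_Icc, smul_eq_mul]
  rw [show δ / 2 - -(δ / 2) = δ by ring,
    ENNReal.inv_mul_cancel (by simp [hδ]) ENNReal.ofReal_ne_top]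

lemma dither_prob {δ s : ℝ} (hδ : 0 < δ) (hs0 : 0 ≤ s) (hs1 : s ≤ 1) (b : ℝ) :
    uniformDitherLaw δ {t : ℝ | Int.fract ((b + t) / δ) < s} = ENNReal.ofReal s := by
  set c : ℝ := (b - δ / 2) / δ with hc
  have hδ0 : δ ≠ 0 := hδ.ne'
  have hpre : {t : ℝ | Int.fract ((b + t) / δ) < s} ∩ Set.Icc (-(δ / 2)) (δ / 2) =
      (fun t : ℝ => (b + t) / δ) ⁻¹' (Set.Icc c (c + 1) ∩ {u : ℝ | Int.fract u < s}) := by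
    ext t
    simp only [Set.mem_inter_iff, Set.mem_setOf_eq, Set.mem_Icc, Set.mem_preimage]
    constructor
    · rintro ⟨h1, h2, h3⟩
      refine ⟨⟨?_, ?_⟩, h1⟩
      · rw [hc, div_le_div_iff_of_pos_right hδ]  -- maybe wrong name
        linarith
      · rw [hc]
        rw [div_add' _ _ _ hδ0, div_le_div_iff_of_pos_right hδ]
        linarith
    · rintro ⟨⟨h1, h2⟩, h3⟩
      refine ⟨h3, ?_, ?_⟩
      · rw [hc, div_le_div_iff_of_pos_right hδ] at h1; linarith
      · rw [hc, div_add' _ _ _ hδ0, div_le_div_iff_of_pos_right hδ] at h2; linarith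
  have hvol : volume ((fun t : ℝ => (b + t) / δ) ⁻¹'
      (Set.Icc c (c + 1) ∩ {u : ℝ | Int.fract u < s})) = ENNReal.ofReal δ * ENNReal.ofReal s := by
    have hcomp : (fun t : ℝ => (b + t) / δ) = (fun y : ℝ => (1 / δ) * y) ∘ (fun t : ℝ => b + t) := by
      funext t; simp [div_eq_mul_inv]; ring
    rw [hcomp, Set.preimage_comp, measure_preimage_add volume b,
      Real.volume_preimage_mul_left (by positivity : (1:ℝ)/δ ≠ 0),
      frac_vol hs0 hs1 c]
    congr 1
    rw [one_div, inv_inv, abs_of_pos hδ]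
  rw [uniformDitherLaw, Measure.smul_apply,
    Measure.restrict_apply (fract_set_meas δ b s), smul_eq_mul, hpre, hvol, ← mul_assoc,
    ENNReal.inv_mul_cancel (by simp [hδ]) ENNReal.ofReal_ne_top, one_mul]

lemma indep_transfer {Ω ι : Type*} [MeasurableSpace Ω] {P : Measure Ω} {f g : ι → Ω → ℝ}
    (h : ∀ i, f i =ᵐ[P] g i) (hf : iIndepFun f P) :
    iIndepFun g P := by
  rw [iIndepFun_iff_measure_inter_preimage_eq_mul] at hf ⊢
  intro S sets hsets
  have hpre : ∀ i : ι, (g i ⁻¹' sets i : Set Ω) =ᵐ[P] (f i ⁻¹' sets i) := by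
    intro i
    filter_upwards [h i] with ω hω
    show (g i ω ∈ sets i) = (f i ω ∈ sets i)
    rw [hω]
  have hint : ((⋂ i ∈ S, g i ⁻¹' sets i : Set Ω)) =ᵐ[P] (⋂ i ∈ S, f i ⁻¹' sets i : Set Ω) := by
    have hall : ∀ᵐ ω ∂P, ∀ i ∈ S, f i ω = g i ω :=
      (MeasureTheory.ae_ball_iff S.countable_toSet).2 fun i _ => h i
    rw [Filter.eventuallyEq_set]
    filter_upwards [hall] with ω hω
    simp only [Set.mem_iInter, Set.mem_preimage]
    constructor
    · intro hm i hi; rw [hω i hi]; exact hm i hi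
    · intro hm i hi; rw [← hω i hi]; exact hm i hi
  rw [measure_congr hint, hf S hsets]
  exact Finset.prod_congr rfl fun i _ => measure_congr (hpre i).symm

set_option maxHeartbeats 1000000 in
/-- Let `a ∈ ℝ^m` be fixed, `δ > 0`, `ζ ∈ (0, δ/2)`, and let `τ₁,…,τ_m` be i.i.d.
`Uniform[−δ/2, δ/2]`. Let `Z = {i ∈ [m] : t ↦ Q_δ(a_i + τ_i + t) is discontinuous on
[−ζ, ζ]}`. Then `P(|Z| ≥ 5mζ/δ) ≤ exp(−mζ/δ)`. -/
theorem stmt4 {Ω : Type*} [MeasurableSpace Ω] (P : Measure Ω) [IsProbabilityMeasure P]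
    (m : ℕ) (a : Fin m → ℝ) (δ ζ : ℝ) (hδ : 0 < δ) (hζ : 0 < ζ) (hζδ : ζ < δ / 2)
    (τ : Fin m → Ω → ℝ)
    (hindep : iIndepFun τ P)
    (hlaw : ∀ i, Measure.map (τ i) P = uniformDitherLaw δ) :
    P {ω | 5 * m * ζ / δ ≤
        (Set.ncard {i : Fin m |
          ¬ ContinuousOn (fun t => uniformQuantizer δ (a i + τ i ω + t)) (Set.Icc (-ζ) ζ)} : ℝ)} ≤
      ENNReal.ofReal (Real.exp (-(m * ζ / δ))) := by
  classical
  set s : ℝ := 2 * ζ / δ with hs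
  have hs0 : 0 ≤ s := by positivity
  have hs1 : s < 1 := by rw [hs, div_lt_one hδ]; linarith
  have hδ0 : δ ≠ 0 := hδ.ne'
  -- a.e. measurability of the τ i
  have hae : ∀ i, AEMeasurable (τ i) P := by
    intro i
    apply aemeasurable_of_map_neZero
    rw [hlaw i]
    refine ⟨fun h0 => ?_⟩
    have := dither_univ hδ
    rw [h0] at this
    simp at this
  set τ' : Fin m → Ω → ℝ := fun i => (hae i).mk (τ i) with hτ'
  have hmeas' : ∀ i, Measurable (τ' i) := fun i => (hae i).measurable_mk
  have heq : ∀ i, τ i =ᵐ[P] τ' i := fun i => (hae i).ae_eq_mk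
  have hlaw' : ∀ i, Measure.map (τ' i) P = uniformDitherLaw δ := fun i => by
    rw [← Measure.map_congr (heq i), hlaw i]
  set B : Fin m → Set ℝ := fun i => {t : ℝ | Int.fract ((a i + ζ + t) / δ) < s} with hB
  have hBmeas : ∀ i, MeasurableSet (B i) := fun i => fract_set_meas δ (a i + ζ) s
  have hPE : ∀ i, P (τ' i ⁻¹' B i) = ENNReal.ofReal s := fun i => by
    rw [← Measure.map_apply (hmeas' i) (hBmeas i), hlaw' i, hB,
      dither_prob hδ hs0 hs1.le (a i + ζ)]
  -- indicator random variables
  set g : Fin m → ℝ → ℝ := fun i => Set.indicator (B i) (fun _ => (1 : ℝ)) with hg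
  have hgmeas : ∀ i, Measurable (g i) := fun i => measurable_const.indicator (hBmeas i)
  set X : Fin m → Ω → ℝ := fun i => g i ∘ τ' i with hX
  have hXmeas : ∀ i, Measurable (X i) := fun i => (hgmeas i).comp (hmeas' i)
  have hXindep : iIndepFun X P :=
    (indep_transfer heq hindep).comp g hgmeas
  have hX01 : ∀ i ω, 0 ≤ X i ω ∧ X i ω ≤ 1 := by
    intro i ω
    simp only [hX, hg, Function.comp_apply, Set.indicator_apply]
    split <;> norm_num
  set t0 : ℝ := Real.log 2 with ht0def
  have ht0 : 0 ≤ t0 := Real.log_nonneg one_le_two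
  have hexpt0 : Real.exp t0 = 2 := Real.exp_log two_pos
  -- mgf of each indicator
  have hmgf : ∀ i, mgf (X i) P t0 = 1 + (Real.exp t0 - 1) * s := by
    intro i
    have hrw : (fun ω => Real.exp (t0 * X i ω)) = fun ω =>
        1 + Set.indicator (τ' i ⁻¹' B i) (fun _ => Real.exp t0 - 1) ω := by
      funext ω
      by_cases h : τ' i ω ∈ B i
      · simp [hX, hg, Set.indicator_of_mem, h, Set.mem_preimage]
      · simp [hX, hg, Set.indicator_of_notMem, h, Set.mem_preimage]
    rw [mgf, hrw, integral_add (integrable_const 1)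
        ((integrable_const (Real.exp t0 - 1)).indicator ((hmeas' i) (hBmeas i))),
      integral_const, integral_indicator_const _ ((hmeas' i) (hBmeas i)), measureReal_def, measureReal_def, hPE i,
      ENNReal.toReal_ofReal hs0]
    simp [mul_comm]
  have hmgfpos : (0:ℝ) ≤ 1 + (Real.exp t0 - 1) * s := by nlinarith [Real.exp_pos t0, hs0]
  -- mgf of the sum
  have hmgfsum : mgf (∑ i, X i) P t0 ≤ Real.exp ((m : ℝ) * ((Real.exp t0 - 1) * s)) := by
    rw [hXindep.mgf_sum hXmeas]
    calc (∏ i : Fin m, mgf (X i) P t0) = (1 + (Real.exp t0 - 1) * s) ^ m := by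
          rw [Finset.prod_congr rfl fun i _ => hmgf i, Finset.prod_const, Finset.card_univ,
            Fintype.card_fin]
      _ ≤ (Real.exp ((Real.exp t0 - 1) * s)) ^ m :=
          pow_le_pow_left₀ hmgfpos (by linarith [Real.add_one_le_exp ((Real.exp t0 - 1) * s)]) m
      _ = Real.exp ((m : ℝ) * ((Real.exp t0 - 1) * s)) := by
          rw [← Real.exp_nat_mul]
  -- integrability for Chernoff
  have hsum_le : ∀ ω, ∑ i : Fin m, X i ω ≤ (m : ℝ) := by
    intro ω
    calc (∑ i : Fin m, X i ω) ≤ ∑ i : Fin m, (1:ℝ) :=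
          Finset.sum_le_sum fun i _ => (hX01 i ω).2
      _ = m := by simp
  have hsumfn : (∑ i, X i) = fun ω => ∑ i : Fin m, X i ω := Finset.sum_fn Finset.univ fun c => X c
  have hint : Integrable (fun ω => Real.exp (t0 * (∑ i, X i) ω)) P := by
    simp only [hsumfn]
    refine Integrable.mono' (integrable_const (Real.exp (t0 * m))) ?_ ?_
    · exact (((Finset.univ.measurable_sum fun i _ => hXmeas i).const_mul t0).exp).aestronglyMeasurable
    · filter_upwards with ω
      rw [Real.norm_eq_abs, abs_of_pos (Real.exp_pos _), Real.exp_le_exp]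
      exact mul_le_mul_of_nonneg_left (hsum_le ω) ht0
  -- Chernoff bound
  have hchern := measure_ge_le_exp_mul_mgf (μ := P) (X := ∑ i, X i) (5 * m * ζ / δ) ht0 hint
  -- identify the target event with the sum event, up to a.e. equality
  have hcount : ∀ (ω : Ω),
      (Set.ncard {i : Fin m |
        ¬ ContinuousOn (fun t => uniformQuantizer δ (a i + τ i ω + t)) (Set.Icc (-ζ) ζ)} : ℝ) =
      ∑ i : Fin m, g i (τ i ω) := by
    intro ω
    set f : Fin m → ℝ := fun i => τ i ω with hf
    have hsetEq : {i : Fin m |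
        ¬ ContinuousOn (fun t => uniformQuantizer δ (a i + f i + t)) (Set.Icc (-ζ) ζ)} =
        {i : Fin m | f i ∈ B i} := by
      ext i
      rw [Set.mem_setOf_eq, Set.mem_setOf_eq, disc_iff hδ hζ hζδ (a i + f i), hB]
      rw [show a i + f i + ζ = a i + ζ + f i by ring]
      rfl
    rw [hsetEq]
    have : {i : Fin m | f i ∈ B i} = ↑(Finset.univ.filter fun i => f i ∈ B i) := by
      ext i; simp
    rw [this, Set.ncard_coe_finset]
    rw [Finset.card_filter]
    push_cast
    apply Finset.sum_congr rfl
    intro i _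
    simp [hg, Set.indicator_apply, hf]
  have haeEq : {ω | 5 * m * ζ / δ ≤
      (Set.ncard {i : Fin m |
        ¬ ContinuousOn (fun t => uniformQuantizer δ (a i + τ i ω + t)) (Set.Icc (-ζ) ζ)} : ℝ)}
      =ᵐ[P] {ω | 5 * m * ζ / δ ≤ (∑ i, X i) ω} := by
    have hall : ∀ᵐ ω ∂P, ∀ i, τ i ω = τ' i ω := ae_all_iff.2 heq
    rw [Filter.eventuallyEq_set]
    filter_upwards [hall] with ω hω
    have hsx : (∑ i, X i) ω = ∑ i : Fin m, g i (τ i ω) := by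
      rw [Finset.sum_apply]
      refine Finset.sum_congr rfl fun i _ => ?_
      show g i (τ' i ω) = g i (τ i ω)
      rw [hω i]
    constructor
    · intro h1
      rw [hsx]
      rwa [hcount ω] at h1
    · intro h1
      rw [hsx] at h1
      rwa [hcount ω]
  rw [measure_congr haeEq]
  -- final numeric computation
  have hfin : Real.exp (-t0 * (5 * m * ζ / δ)) * mgf (∑ i, X i) P t0 ≤
      Real.exp (-(m * ζ / δ)) := by
    calc Real.exp (-t0 * (5 * m * ζ / δ)) * mgf (∑ i, X i) P t0
        ≤ Real.exp (-t0 * (5 * m * ζ / δ)) * Real.exp ((m : ℝ) * ((Real.exp t0 - 1) * s)) :=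
          mul_le_mul_of_nonneg_left hmgfsum (le_of_lt (Real.exp_pos _))
      _ = Real.exp (-t0 * (5 * m * ζ / δ) + (m : ℝ) * ((Real.exp t0 - 1) * s)) :=
          (Real.exp_add _ _).symm
      _ ≤ Real.exp (-(m * ζ / δ)) := by
          rw [Real.exp_le_exp, hexpt0, hs]
          have hq : 0 ≤ (m : ℝ) * ζ / δ := by positivity
          have hlog : (0.6931471803 : ℝ) < t0 := Real.log_two_gt_d9
          have hrw1 : (m : ℝ) * ((2 - 1) * (2 * ζ / δ)) = 2 * ((m : ℝ) * ζ / δ) := by ring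
          have hrw2 : -t0 * (5 * (m : ℝ) * ζ / δ) = -(5 * t0) * ((m : ℝ) * ζ / δ) := by ring
          rw [hrw1, hrw2]
          nlinarith [hq, hlog]
  have hPfin : P {ω | 5 * m * ζ / δ ≤ (∑ i, X i) ω} =
      ENNReal.ofReal (P {ω | 5 * m * ζ / δ ≤ (∑ i, X i) ω}).toReal :=
    (ENNReal.ofReal_toReal (measure_ne_top P _)).symm
  rw [hPfin]
  exact ENNReal.ofReal_le_ofReal (hchern.trans hfin)
end

section
/- Let A ⊂ ℝ^n and B ⊂ ℝ^m be cones, and set C = A × B ⊂ ℝ^{n+m}. With A* = A ∩ S^{n−1}, B* = B ∩ S^{m−1}, C* = C ∩ S^{n+m−1}, the Gaussian complexities satisfy max{γ(A*), γ(B*)} ≤ γ(C*) ≤ γ(A*) + γ(B*). -/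
open MeasureTheory ProbabilityTheory Real

/-- The standard Gaussian measure on `ℝ^n` (i.i.d. `N(0,1)` coordinates). -/
noncomputable def stdGaussianPi (n : ℕ) : Measure (Fin n → ℝ) :=
  Measure.pi fun _ => gaussianReal 0 1

/-- Gaussian complexity `γ(T) = E sup_{x ∈ T} |⟨g, x⟩|` for `g ~ N(0, I_n)`. -/
noncomputable def gaussComplexity {n : ℕ} (T : Set (Fin n → ℝ)) : ℝ :=
  ∫ g, sSup ((fun x => |∑ i, g i * x i|) '' T) ∂(stdGaussianPi n)

/-- Gaussian complexity for subsets of `ℝ^n × ℝ^m`, with a standard Gaussian vector on the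
product space and the Euclidean inner product `⟨(g₁,g₂),(a,b)⟩ = ⟨g₁,a⟩ + ⟨g₂,b⟩`. -/
noncomputable def gaussComplexityProd {n m : ℕ} (T : Set ((Fin n → ℝ) × (Fin m → ℝ))) : ℝ :=
  ∫ g, sSup ((fun p => |(∑ i, g.1 i * p.1 i) + ∑ j, g.2 j * p.2 j|) '' T)
    ∂((stdGaussianPi n).prod (stdGaussianPi m))

instance (n : ℕ) : IsProbabilityMeasure (stdGaussianPi n) := by
  unfold stdGaussianPi; infer_instance

lemma integrable_abs_gaussian : Integrable (fun x : ℝ => |x|) (gaussianReal 0 1) := by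
  rw [gaussianReal_of_var_ne_zero 0 one_ne_zero]
  rw [integrable_withDensity_iff (measurable_gaussianPDF 0 1)
    (ae_of_all _ fun x => ENNReal.ofReal_lt_top)]
  have h : Integrable (fun x : ℝ => (√(2 * π * ((1:NNReal):ℝ)))⁻¹ * |x * rexp (-(1/2) * x ^ 2)|) :=
    ((integrable_mul_exp_neg_mul_sq (b := 1/2) (by norm_num)).abs).const_mul _
  refine h.congr (ae_of_all _ fun x => ?_)
  simp only [gaussianPDF_def, gaussianPDFReal]
  rw [ENNReal.toReal_ofReal (by positivity)]
  rw [abs_mul, abs_of_pos (exp_pos _)]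
  push_cast
  ring_nf

lemma map_eval_pi {ι : Type*} [Fintype ι] [DecidableEq ι] {α : ι → Type*}
    [∀ i, MeasurableSpace (α i)]
    (μ : ∀ i, Measure (α i)) [∀ i, IsProbabilityMeasure (μ i)] (i : ι) :
    (Measure.pi μ).map (Function.eval i) = μ i := by
  ext s hs
  rw [Measure.map_apply (measurable_pi_apply i) hs, Set.eval_preimage, Measure.pi_pi]
  rw [Finset.prod_eq_single i (fun j _ hj => by simp [Function.update_of_ne hj]) (by simp)]
  simp

lemma integrable_abs_coord {d : ℕ} (i : Fin d) :
    Integrable (fun g : Fin d → ℝ => |g i|) (stdGaussianPi d) := by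
  have h := integrable_abs_gaussian
  rw [← map_eval_pi (fun _ : Fin d => gaussianReal 0 1) i] at h
  rw [integrable_map_measure h.aestronglyMeasurable
    (measurable_pi_apply i).aemeasurable] at h
  exact h

lemma integrable_sum_abs (d : ℕ) :
    Integrable (fun g : Fin d → ℝ => ∑ i, |g i|) (stdGaussianPi d) :=
  integrable_finset_sum _ fun i _ => integrable_abs_coord i

section SupFun
variable {E X : Type*} [TopologicalSpace E] [MeasurableSpace E] [OpensMeasurableSpace E]

set_option linter.unusedSectionVars false

/-- sup of `k g x` over `x ∈ T`. -/
noncomputable def supFun (k : E → X → ℝ) (T : Set X) (g : E) : ℝ :=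
  sSup ((fun x => k g x) '' T)

lemma bddAbove_supImage {k : E → X → ℝ} {T : Set X} {M : E → ℝ}
    (hM : ∀ g, ∀ x ∈ T, k g x ≤ M g) (g : E) : BddAbove ((fun x => k g x) '' T) :=
  ⟨M g, by rintro _ ⟨x, hx, rfl⟩; exact hM g x hx⟩

lemma supFun_nonneg {k : E → X → ℝ} {T : Set X}
    (h0 : ∀ g, ∀ x ∈ T, 0 ≤ k g x) (g : E) : 0 ≤ supFun k T g :=
  Real.sSup_nonneg (by rintro _ ⟨x, hx, rfl⟩; exact h0 g x hx)

lemma supFun_le {k : E → X → ℝ} {T : Set X} {M : E → ℝ}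
    (hM0 : ∀ g, 0 ≤ M g) (hM : ∀ g, ∀ x ∈ T, k g x ≤ M g) (g : E) : supFun k T g ≤ M g :=
  Real.sSup_le (by rintro _ ⟨x, hx, rfl⟩; exact hM g x hx) (hM0 g)

lemma supFun_le_of_forall {k : E → X → ℝ} {T : Set X} (g : E) {c : ℝ}
    (h : ∀ x ∈ T, k g x ≤ c) (hc : 0 ≤ c) : supFun k T g ≤ c :=
  Real.sSup_le (by rintro _ ⟨x, hx, rfl⟩; exact h x hx) hc

lemma le_supFun {k : E → X → ℝ} {T : Set X} {M : E → ℝ}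
    (hM : ∀ g, ∀ x ∈ T, k g x ≤ M g) {x : X} (hx : x ∈ T) (g : E) :
    k g x ≤ supFun k T g :=
  le_csSup (bddAbove_supImage hM g) (Set.mem_image_of_mem _ hx)

lemma lowerSemicontinuous_supFun {k : E → X → ℝ} {T : Set X} {M : E → ℝ}
    (hc : ∀ x ∈ T, Continuous fun g => k g x)
    (hM : ∀ g, ∀ x ∈ T, k g x ≤ M g) :
    LowerSemicontinuous (supFun k T) := by
  intro g y hy
  rcases T.eq_empty_or_nonempty with rfl | hT
  · exact Filter.Eventually.of_forall fun g' => by simpa [supFun] using hy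
  · obtain ⟨z, ⟨x, hx, rfl⟩, hz⟩ := exists_lt_of_lt_csSup (hT.image _) hy
    have hev : ∀ᶠ g' in nhds g, y < k g' x :=
      ((hc x hx).continuousAt).eventually (eventually_gt_nhds hz)
    filter_upwards [hev] with g' hg'
    exact hg'.trans_le (le_supFun hM hx g')

lemma integrable_supFun {k : E → X → ℝ} {T : Set X} {M : E → ℝ} {μ : Measure E}
    (hMint : Integrable M μ)
    (h0 : ∀ g, ∀ x ∈ T, 0 ≤ k g x) (hM0 : ∀ g, 0 ≤ M g)
    (hM : ∀ g, ∀ x ∈ T, k g x ≤ M g)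
    (hc : ∀ x ∈ T, Continuous fun g => k g x) :
    Integrable (supFun k T) μ := by
  refine hMint.mono' ((lowerSemicontinuous_supFun hc hM).measurable.aestronglyMeasurable)
    (ae_of_all _ fun g => ?_)
  rw [Real.norm_eq_abs, abs_of_nonneg (supFun_nonneg h0 g)]
  exact supFun_le hM0 hM g

end SupFun

lemma abs_dot_le_sum_abs {d : ℕ} (g x : Fin d → ℝ) (hx : ∑ i, x i ^ 2 ≤ 1) :
    |∑ i, g i * x i| ≤ ∑ i, |g i| := by
  refine (Finset.abs_sum_le_sum_abs _ _).trans (Finset.sum_le_sum fun i _ => ?_)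
  have hxi : x i ^ 2 ≤ 1 :=
    le_trans (Finset.single_le_sum (fun j _ => sq_nonneg (x j)) (Finset.mem_univ i)) hx
  have : |x i| ≤ 1 := by nlinarith [abs_nonneg (x i), sq_abs (x i)]
  calc |g i * x i| = |g i| * |x i| := abs_mul _ _
    _ ≤ |g i| * 1 := mul_le_mul_of_nonneg_left this (abs_nonneg _)
    _ = |g i| := mul_one _

/-- key cone lemma: a point of the cone inside the unit ball has inner products dominated
by the sup over the cone's sphere portion. -/
lemma cone_le_sup {d : ℕ} {A : Set (Fin d → ℝ)}
    (hA : ∀ c : ℝ, 0 ≤ c → ∀ x ∈ A, c • x ∈ A)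
    {a : Fin d → ℝ} (ha : a ∈ A) (hle : ∑ i, a i ^ 2 ≤ 1) (g : Fin d → ℝ) :
    |∑ i, g i * a i| ≤
      supFun (fun g x => |∑ i, g i * x i|) {x ∈ A | ∑ i, x i ^ 2 = 1} g := by
  have hM : ∀ g : Fin d → ℝ, ∀ x ∈ {x ∈ A | ∑ i, x i ^ 2 = 1},
      |∑ i, g i * x i| ≤ ∑ i, |g i| := fun g x hx => abs_dot_le_sum_abs g x hx.2.le
  have h0 : ∀ g : Fin d → ℝ, ∀ x ∈ {x ∈ A | ∑ i, x i ^ 2 = 1},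
      (0:ℝ) ≤ |∑ i, g i * x i| := fun g x _ => abs_nonneg _
  have hsum0 : (0:ℝ) ≤ ∑ i, a i ^ 2 := Finset.sum_nonneg fun i _ => sq_nonneg _
  by_cases h0' : ∑ i, a i ^ 2 = 0
  · have hai : ∀ i ∈ Finset.univ, a i ^ 2 = 0 :=
      (Finset.sum_eq_zero_iff_of_nonneg fun i _ => sq_nonneg _).mp h0'
    have : ∀ i, a i = 0 := fun i => by
      have := hai i (Finset.mem_univ i); exact pow_eq_zero_iff (n := 2) (by norm_num) |>.mp this
    simp only [this, mul_zero, Finset.sum_const_zero, abs_zero]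
    exact supFun_nonneg h0 g
  · set s : ℝ := √(∑ i, a i ^ 2) with hs
    have hspos : 0 < s := Real.sqrt_pos.2 (lt_of_le_of_ne hsum0 (Ne.symm h0'))
    have hs2 : s ^ 2 = ∑ i, a i ^ 2 := Real.sq_sqrt hsum0
    have hxA : s⁻¹ • a ∈ A := hA s⁻¹ (by positivity) a ha
    have hx1 : ∑ i, (s⁻¹ • a) i ^ 2 = 1 := by
      simp only [Pi.smul_apply, smul_eq_mul, mul_pow, ← Finset.mul_sum]
      rw [← hs2]
      field_simp
    have key : |∑ i, g i * a i| = s * |∑ i, g i * (s⁻¹ • a) i| := by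
      have : ∑ i, g i * a i = s * ∑ i, g i * (s⁻¹ • a) i := by
        rw [Finset.mul_sum]
        refine Finset.sum_congr rfl fun i _ => ?_
        simp only [Pi.smul_apply, smul_eq_mul]
        field_simp
      rw [this, abs_mul, abs_of_pos hspos]
    have hs1 : s ≤ 1 := by
      rw [hs, show (1:ℝ) = √1 by simp]
      exact Real.sqrt_le_sqrt hle
    rw [key]
    calc s * |∑ i, g i * (s⁻¹ • a) i|
        ≤ 1 * supFun (fun g x => |∑ i, g i * x i|) {x ∈ A | ∑ i, x i ^ 2 = 1} g := by
          refine mul_le_mul hs1 (le_supFun hM ⟨hxA, hx1⟩ g) (abs_nonneg _) zero_le_one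
      _ = _ := one_mul _


/-- Let `A ⊂ ℝ^n` and `B ⊂ ℝ^m` be cones, and set `C = A × B ⊂ ℝ^{n+m}`. With
`A* = A ∩ S^{n−1}`, `B* = B ∩ S^{m−1}`, `C* = C ∩ S^{n+m−1}`, the Gaussian complexities
satisfy `max{γ(A*), γ(B*)} ≤ γ(C*) ≤ γ(A*) + γ(B*)`. -/
theorem stmt6 {n m : ℕ} (A : Set (Fin n → ℝ)) (B : Set (Fin m → ℝ))
    (hA : ∀ c : ℝ, 0 ≤ c → ∀ x ∈ A, c • x ∈ A) (hAne : A.Nonempty)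
    (hB : ∀ c : ℝ, 0 ≤ c → ∀ x ∈ B, c • x ∈ B) (hBne : B.Nonempty) :
    max (gaussComplexity {x ∈ A | ∑ i, x i ^ 2 = 1})
        (gaussComplexity {x ∈ B | ∑ j, x j ^ 2 = 1}) ≤
      gaussComplexityProd {p ∈ A ×ˢ B | (∑ i, p.1 i ^ 2) + ∑ j, p.2 j ^ 2 = 1} ∧
    gaussComplexityProd {p ∈ A ×ˢ B | (∑ i, p.1 i ^ 2) + ∑ j, p.2 j ^ 2 = 1} ≤
      gaussComplexity {x ∈ A | ∑ i, x i ^ 2 = 1} +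
        gaussComplexity {x ∈ B | ∑ j, x j ^ 2 = 1} := by
  classical
  set μn := stdGaussianPi n with hμn
  set μm := stdGaussianPi m with hμm
  set π' := μn.prod μm with hπ'
  set SA : Set (Fin n → ℝ) := {x ∈ A | ∑ i, x i ^ 2 = 1} with hSAdef
  set SB : Set (Fin m → ℝ) := {x ∈ B | ∑ j, x j ^ 2 = 1} with hSBdef
  set SC : Set ((Fin n → ℝ) × (Fin m → ℝ)) :=
    {p ∈ A ×ˢ B | (∑ i, p.1 i ^ 2) + ∑ j, p.2 j ^ 2 = 1} with hSCdef
  set kA : (Fin n → ℝ) → (Fin n → ℝ) → ℝ := fun g x => |∑ i, g i * x i| with hkA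
  set kB : (Fin m → ℝ) → (Fin m → ℝ) → ℝ := fun g x => |∑ j, g j * x j| with hkB
  set kC : ((Fin n → ℝ) × (Fin m → ℝ)) → ((Fin n → ℝ) × (Fin m → ℝ)) → ℝ :=
    fun g p => |(∑ i, g.1 i * p.1 i) + ∑ j, g.2 j * p.2 j| with hkC
  set MA : (Fin n → ℝ) → ℝ := fun g => ∑ i, |g i| with hMAdef
  set MB : (Fin m → ℝ) → ℝ := fun g => ∑ j, |g j| with hMBdef
  set MC : ((Fin n → ℝ) × (Fin m → ℝ)) → ℝ := fun g => MA g.1 + MB g.2 with hMCdef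
  -- basic facts about SC memberships
  have hSCsum1 : ∀ p ∈ SC, ∑ i, p.1 i ^ 2 ≤ 1 := by
    rintro p ⟨-, hsum⟩
    have h2 : (0:ℝ) ≤ ∑ j, p.2 j ^ 2 := Finset.sum_nonneg fun j _ => sq_nonneg _
    linarith
  have hSCsum2 : ∀ p ∈ SC, ∑ j, p.2 j ^ 2 ≤ 1 := by
    rintro p ⟨-, hsum⟩
    have h1 : (0:ℝ) ≤ ∑ i, p.1 i ^ 2 := Finset.sum_nonneg fun i _ => sq_nonneg _
    linarith
  -- bound hypotheses
  have hMA : ∀ g, ∀ x ∈ SA, kA g x ≤ MA g := fun g x hx => abs_dot_le_sum_abs g x hx.2.le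
  have hMB : ∀ g, ∀ x ∈ SB, kB g x ≤ MB g := fun g x hx => abs_dot_le_sum_abs g x hx.2.le
  have hMC : ∀ g, ∀ p ∈ SC, kC g p ≤ MC g := by
    intro g p hp
    refine (abs_add_le _ _).trans (add_le_add ?_ ?_)
    · exact abs_dot_le_sum_abs g.1 p.1 (hSCsum1 p hp)
    · exact abs_dot_le_sum_abs g.2 p.2 (hSCsum2 p hp)
  have hMA0 : ∀ g, 0 ≤ MA g := fun g => Finset.sum_nonneg fun i _ => abs_nonneg _
  have hMB0 : ∀ g, 0 ≤ MB g := fun g => Finset.sum_nonneg fun j _ => abs_nonneg _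
  have hMC0 : ∀ g, 0 ≤ MC g := fun g => add_nonneg (hMA0 g.1) (hMB0 g.2)
  have h0A : ∀ g, ∀ x ∈ SA, (0:ℝ) ≤ kA g x := fun g x _ => abs_nonneg _
  have h0B : ∀ g, ∀ x ∈ SB, (0:ℝ) ≤ kB g x := fun g x _ => abs_nonneg _
  have h0C : ∀ g, ∀ p ∈ SC, (0:ℝ) ≤ kC g p := fun g p _ => abs_nonneg _
  -- continuity
  have hcA : ∀ x ∈ SA, Continuous fun g => kA g x := fun x _ =>
    (continuous_finset_sum _ fun i _ => (continuous_apply i).mul continuous_const).abs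
  have hcB : ∀ x ∈ SB, Continuous fun g => kB g x := fun x _ =>
    (continuous_finset_sum _ fun j _ => (continuous_apply j).mul continuous_const).abs
  have hcC : ∀ p ∈ SC, Continuous fun g => kC g p := fun p _ =>
    ((continuous_finset_sum _ fun i _ =>
        ((continuous_apply i).comp continuous_fst).mul continuous_const).add
      (continuous_finset_sum _ fun j _ =>
        ((continuous_apply j).comp continuous_snd).mul continuous_const)).abs
  -- integrability
  have hIMA : Integrable MA μn := integrable_sum_abs n
  have hIMB : Integrable MB μm := integrable_sum_abs m
  have hfst : π'.map Prod.fst = μn := by rw [Measure.map_fst_prod]; simp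
  have hsnd : π'.map Prod.snd = μm := by rw [Measure.map_snd_prod]; simp
  have hIMAfst : Integrable (fun g : (Fin n → ℝ) × (Fin m → ℝ) => MA g.1) π' := by
    have h := hIMA; rw [← hfst] at h
    exact (integrable_map_measure h.aestronglyMeasurable measurable_fst.aemeasurable).mp h
  have hIMBsnd : Integrable (fun g : (Fin n → ℝ) × (Fin m → ℝ) => MB g.2) π' := by
    have h := hIMB; rw [← hsnd] at h
    exact (integrable_map_measure h.aestronglyMeasurable measurable_snd.aemeasurable).mp h
  have hIMC : Integrable MC π' := hIMAfst.add hIMBsnd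
  have hIA : Integrable (supFun kA SA) μn := integrable_supFun hIMA h0A hMA0 hMA hcA
  have hIB : Integrable (supFun kB SB) μm := integrable_supFun hIMB h0B hMB0 hMB hcB
  have hIC : Integrable (supFun kC SC) π' := integrable_supFun hIMC h0C hMC0 hMC hcC
  have hIAfst : Integrable (fun g : (Fin n → ℝ) × (Fin m → ℝ) => supFun kA SA g.1) π' := by
    have h := hIA; rw [← hfst] at h
    exact (integrable_map_measure h.aestronglyMeasurable measurable_fst.aemeasurable).mp h
  have hIBsnd : Integrable (fun g : (Fin n → ℝ) × (Fin m → ℝ) => supFun kB SB g.2) π' := by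
    have h := hIB; rw [← hsnd] at h
    exact (integrable_map_measure h.aestronglyMeasurable measurable_snd.aemeasurable).mp h
  -- integral marginal identities
  have hEfst : ∫ g, supFun kA SA g ∂μn = ∫ g, supFun kA SA g.1 ∂π' := by
    have hAm : AEStronglyMeasurable (supFun kA SA) (π'.map Prod.fst) := by
      rw [hfst]; exact hIA.aestronglyMeasurable
    calc ∫ g, supFun kA SA g ∂μn = ∫ g, supFun kA SA g ∂(π'.map Prod.fst) := by rw [hfst]
      _ = ∫ g, supFun kA SA g.1 ∂π' := integral_map measurable_fst.aemeasurable hAm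
  have hEsnd : ∫ g, supFun kB SB g ∂μm = ∫ g, supFun kB SB g.2 ∂π' := by
    have hBm : AEStronglyMeasurable (supFun kB SB) (π'.map Prod.snd) := by
      rw [hsnd]; exact hIB.aestronglyMeasurable
    calc ∫ g, supFun kB SB g ∂μm = ∫ g, supFun kB SB g ∂(π'.map Prod.snd) := by rw [hsnd]
      _ = ∫ g, supFun kB SB g.2 ∂π' := integral_map measurable_snd.aemeasurable hBm
  -- definitional identification of the complexities
  have hgA : gaussComplexity SA = ∫ g, supFun kA SA g ∂μn := rfl
  have hgB : gaussComplexity SB = ∫ g, supFun kB SB g ∂μm := rfl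
  have hgC : gaussComplexityProd SC = ∫ g, supFun kC SC g ∂π' := rfl
  -- zero elements of the cones
  have h0inA : (0 : Fin n → ℝ) ∈ A := by
    obtain ⟨a, ha⟩ := hAne; simpa using hA 0 le_rfl a ha
  have h0inB : (0 : Fin m → ℝ) ∈ B := by
    obtain ⟨b, hb⟩ := hBne; simpa using hB 0 le_rfl b hb
  -- pointwise inequalities
  have hpt1 : ∀ g : (Fin n → ℝ) × (Fin m → ℝ), supFun kA SA g.1 ≤ supFun kC SC g := by
    intro g
    refine Real.sSup_le ?_ (supFun_nonneg h0C g)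
    rintro _ ⟨x, hx, rfl⟩
    have hmem : (x, (0 : Fin m → ℝ)) ∈ SC := ⟨⟨hx.1, h0inB⟩, by simpa using hx.2⟩
    have heq : kA g.1 x = kC g (x, (0 : Fin m → ℝ)) := by simp [hkA, hkC]
    exact le_of_eq_of_le heq (le_supFun hMC hmem g)
  have hpt2 : ∀ g : (Fin n → ℝ) × (Fin m → ℝ), supFun kB SB g.2 ≤ supFun kC SC g := by
    intro g
    refine Real.sSup_le ?_ (supFun_nonneg h0C g)
    rintro _ ⟨x, hx, rfl⟩
    have hmem : ((0 : Fin n → ℝ), x) ∈ SC := ⟨⟨h0inA, hx.1⟩, by simpa using hx.2⟩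
    have heq : kB g.2 x = kC g ((0 : Fin n → ℝ), x) := by simp [hkB, hkC]
    exact le_of_eq_of_le heq (le_supFun hMC hmem g)
  have hpt3 : ∀ g : (Fin n → ℝ) × (Fin m → ℝ),
      supFun kC SC g ≤ supFun kA SA g.1 + supFun kB SB g.2 := by
    intro g
    refine supFun_le_of_forall g ?_
      (add_nonneg (supFun_nonneg h0A g.1) (supFun_nonneg h0B g.2))
    rintro ⟨a, b⟩ hp
    refine (abs_add_le _ _).trans (add_le_add ?_ ?_)
    · exact cone_le_sup hA hp.1.1 (hSCsum1 _ hp) g.1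
    · exact cone_le_sup hB hp.1.2 (hSCsum2 _ hp) g.2
  constructor
  · rw [hgC]
    refine max_le ?_ ?_
    · rw [hgA, hEfst]
      exact integral_mono hIAfst hIC hpt1
    · rw [hgB, hEsnd]
      exact integral_mono hIBsnd hIC hpt2
  · rw [hgC, hgA, hgB, hEfst, hEsnd, ← integral_add hIAfst hIBsnd]
    exact integral_mono hIC (hIAfst.add hIBsnd) hpt3
end

section
/- Let f be a norm on ℝ^n and let X, X̄ be linear subspaces with X ⊂ X̄ such that f is decomposable over (X, X̄^⊥), i.e., f(x₁ + x₂) = f(x₁) + f(x₂) for all x₁ ∈ X and x₂ ∈ X̄^⊥. If x* ∈ X and x̂ = x* + Δ, then f(x̂) − f(x*) ≥ f(P_{X̄^⊥}Δ) − f(P_{X̄}Δ), where P denotes orthogonal projection. -/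
/-- Let `f` be a norm on `ℝ^n` and let `X, X̄` be linear subspaces with `X ⊂ X̄` such that
`f` is decomposable over `(X, X̄^⊥)`, i.e., `f(x₁ + x₂) = f(x₁) + f(x₂)` for all `x₁ ∈ X`
and `x₂ ∈ X̄^⊥`. If `x* ∈ X` and `x̂ = x* + Δ`, then
`f(x̂) − f(x*) ≥ f(P_{X̄^⊥}Δ) − f(P_{X̄}Δ)`, where `P` denotes orthogonal projection. -/
theorem stmt19 {n : ℕ} (f : EuclideanSpace ℝ (Fin n) → ℝ)
    (hsub : ∀ x y, f (x + y) ≤ f x + f y) (hneg : ∀ x, f (-x) = f x)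
    (X Xbar : Submodule ℝ (EuclideanSpace ℝ (Fin n))) (hXX : X ≤ Xbar)
    (hdec : ∀ x₁ ∈ X, ∀ x₂ ∈ Xbarᗮ, f (x₁ + x₂) = f x₁ + f x₂)
    (xstar Δ : EuclideanSpace ℝ (Fin n)) (hx : xstar ∈ X) :
    f ((Submodule.orthogonalProjectionOnto Xbarᗮ Δ : EuclideanSpace ℝ (Fin n))) -
        f ((Submodule.orthogonalProjectionOnto Xbar Δ : EuclideanSpace ℝ (Fin n))) ≤
      f (xstar + Δ) - f xstar := by
  set a : EuclideanSpace ℝ (Fin n) := (Submodule.orthogonalProjectionOnto Xbar Δ : EuclideanSpace ℝ (Fin n))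
  set b : EuclideanSpace ℝ (Fin n) := (Submodule.orthogonalProjectionOnto Xbarᗮ Δ : EuclideanSpace ℝ (Fin n))
  have hΔ : Δ = a + b := (Submodule.starProjection_add_starProjection_orthogonal (K := Xbar) Δ).symm
  have hdecomp : f (xstar + b) = f xstar + f b := hdec xstar hx b (Submodule.orthogonalProjectionOnto Xbarᗮ Δ).2
  have htri : f (xstar + b) ≤ f (xstar + Δ) + f a := by
    have : f ((xstar + Δ) + (-a)) ≤ f (xstar + Δ) + f (-a) := hsub _ _
    rw [hneg] at this
    have heq : (xstar + Δ) + (-a) = xstar + b := by rw [hΔ]; abel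
    rwa [heq] at this
  linarith
end
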